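/- arXiv:1805.00800 — 3 statements merged into one kernel-verified Lean document; each statement's English description precedes it below -/
import Mathlib

section
/- (Cassels' inhomogeneous transference theorem.) Let n ≥ 1, let ω ∈ ℝⁿ and let L(x) = ω₁x₁ + … + ωₙxₙ be the associated linear form. Let A, X > 0 and suppose that there is no x ∈ ℤⁿ \ {0} with ‖L(x)‖ ≤ A and |x_i| ≤ X for all i. Then for every a ∈ ℝ there exists x ∈ ℤⁿ with ‖L(x) − a‖ ≤ A₁ and |x_i| ≤ X₁ for all i, where h = X^{−n}A^{−1}, A₁ = (h+1)A/2 and X₁ = (h+1)X/2. -/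
/-- `distInt t` is the distance from the real number `t` to the nearest integer,
`‖t‖ = min_{p ∈ ℤ} |t − p|`. -/
noncomputable def distInt (t : ℝ) : ℝ := |t - round t|


open Pointwise

lemma distInt_le_half (t : ℝ) : distInt t ≤ 1 / 2 := abs_sub_round t

lemma distInt_le (t : ℝ) (c : ℤ) : distInt t ≤ |t - c| := round_le t c

/-- iterated pointwise sumset in `ZMod N` -/
def iterSum {N : ℕ} (S : Finset (ZMod N)) : ℕ → Finset (ZMod N)
  | 0 => {0}
  | m + 1 => iterSum S m + S

lemma iterSum_nonempty {N : ℕ} (S : Finset (ZMod N)) (hS : S.Nonempty) :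
    ∀ m, (iterSum S m).Nonempty
  | 0 => ⟨0, by simp [iterSum]⟩
  | (m+1) => (iterSum_nonempty S hS m).add hS

lemma iterSum_card {N : ℕ} (hN : N.Prime) (S : Finset (ZMod N)) (hS : S.Nonempty) :
    ∀ m : ℕ, min N (m * (S.card - 1) + 1) ≤ (iterSum S m).card := by
  intro m
  induction m with
  | zero => simp [iterSum]
  | succ m ih =>
    have hcd := ZMod.cauchy_davenport hN (iterSum_nonempty S hS m) hS
    have h1 : iterSum S (m + 1) = iterSum S m + S := rfl
    have hs1 : 1 ≤ S.card := hS.card_pos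
    rw [h1]
    have hmul : (m+1) * (S.card - 1) = m * (S.card - 1) + (S.card - 1) := by ring
    omega

set_option maxHeartbeats 2000000 in
/-- Cassels' inhomogeneous transference theorem: if the linear form
`L(x) = ω₁x₁ + ⋯ + ωₙxₙ` admits no nonzero integer vector `x` with `‖L(x)‖ ≤ A` and
`|xᵢ| ≤ X`, then for every `a ∈ ℝ` there is an integer vector `x` with
`‖L(x) − a‖ ≤ A₁ = (h+1)A/2` and `|xᵢ| ≤ X₁ = (h+1)X/2`, where `h = X⁻ⁿA⁻¹`. -/
theorem cassels_inhomogeneous (n : ℕ) (hn : 1 ≤ n) (ω : Fin n → ℝ)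
    (A X : ℝ) (hA : 0 < A) (hX : 0 < X)
    (h : ¬ ∃ x : Fin n → ℤ, x ≠ 0 ∧
      distInt (∑ i, ω i * (x i : ℝ)) ≤ A ∧ ∀ i, (|x i| : ℝ) ≤ X) :
    ∀ a : ℝ, ∃ x : Fin n → ℤ,
      distInt (∑ i, ω i * (x i : ℝ) - a) ≤ ((X ^ n)⁻¹ * A⁻¹ + 1) * A / 2 ∧
      ∀ i, (|x i| : ℝ) ≤ ((X ^ n)⁻¹ * A⁻¹ + 1) * X / 2 := by
  intro a
  have hAne : A ≠ 0 := ne_of_gt hA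
  have hXn : (0:ℝ) < X ^ n := pow_pos hX n
  have hbA : ((X ^ n)⁻¹ * A⁻¹ + 1) * A / 2 = ((X ^ n)⁻¹ + A) / 2 := by
    field_simp
  rcases le_or_gt 1 ((X ^ n)⁻¹ + A) with hc | hc
  · refine ⟨0, ?_, ?_⟩
    · rw [hbA]; exact le_trans (distInt_le_half _) (by linarith)
    · intro i; simp only [Pi.zero_apply, abs_zero, Int.cast_zero]; positivity
  -- main case
  set L : (Fin n → ℤ) → ℝ := fun x => ∑ i, ω i * (x i : ℝ) with hLdef
  have hLadd : ∀ x y : Fin n → ℤ, L (x + y) = L x + L y := by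
    intro x y
    simp only [hLdef]
    rw [← Finset.sum_add_distrib]
    apply Finset.sum_congr rfl
    intro i _
    simp only [Pi.add_apply]
    push_cast
    ring
  have hLsub : ∀ x y : Fin n → ℤ, L (x - y) = L x - L y := by
    intro x y
    simp only [hLdef]
    rw [← Finset.sum_sub_distrib]
    apply Finset.sum_congr rfl
    intro i _
    simp only [Pi.sub_apply]
    push_cast
    ring
  have hL0 : L 0 = 0 := by simp [hLdef]
  have hA1 : A < 1 := by
    have : 0 < (X ^ n)⁻¹ := inv_pos.mpr hXn
    linarith
  have hX1 : 1 < X := by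
    by_contra hle
    push_neg at hle
    have h1 : X ^ n ≤ 1 := pow_le_one₀ hX.le hle
    have hinv : (X ^ n)⁻¹ * X ^ n = 1 := inv_mul_cancel₀ (ne_of_gt hXn)
    have h2 : (0:ℝ) < (X ^ n)⁻¹ := inv_pos.mpr hXn
    nlinarith
  set Q : ℕ := ⌊X⌋₊ with hQdef
  have hQ1 : 1 ≤ Q := Nat.le_floor (by exact_mod_cast hX1.le)
  have hQle : (Q:ℝ) ≤ X := Nat.floor_le hX.le
  have hQgt : X < (Q:ℝ) + 1 := Nat.lt_floor_add_one X
  set M : ℕ := (Q+1)^n with hMdef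
  have hM1 : 1 ≤ M := Nat.one_le_pow _ _ (Nat.succ_pos Q)
  have hMR : ((M:ℝ)) = ((Q:ℝ)+1)^n := by rw [hMdef]; push_cast; ring
  have hMX : X ^ n ≤ (M:ℝ) := by
    rw [hMR]; exact pow_le_pow_left₀ hX.le (by linarith) n
  have hM0 : (0:ℝ) < (M:ℝ) := by exact_mod_cast hM1
  set B : Finset (Fin n → ℤ) := Finset.Icc 0 (fun _ => (Q:ℤ)) with hBdef
  have hBmem : ∀ x : Fin n → ℤ, x ∈ B ↔ ∀ i, 0 ≤ x i ∧ x i ≤ (Q:ℤ) := by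
    intro x
    rw [hBdef, Finset.mem_Icc]
    constructor
    · rintro ⟨h1, h2⟩ i; exact ⟨h1 i, h2 i⟩
    · intro hi; exact ⟨fun i => (hi i).1, fun i => (hi i).2⟩
  have hBne : B.Nonempty := ⟨0, (hBmem 0).mpr (fun i => by simp)⟩
  have hBcard : B.card = M := by
    have h1 : ((Q:ℤ) + 1).toNat = Q + 1 := by omega
    rw [hBdef, Pi.card_Icc]
    simp [Int.card_Icc, h1, hMdef]
  have hSEP : ∀ x ∈ B, ∀ y ∈ B, x ≠ y → A < distInt (L x - L y) := by
    intro x hx y hy hxy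
    by_contra hle
    push_neg at hle
    apply h
    refine ⟨x - y, sub_ne_zero.mpr hxy, ?_, ?_⟩
    · rw [show (∑ i, ω i * (((x - y) i : ℤ) : ℝ)) = L x - L y from hLsub x y]
      exact hle
    · intro i
      have hxi := ((hBmem x).mp hx) i
      have hyi := ((hBmem y).mp hy) i
      have habs : |(x - y) i| ≤ (Q:ℤ) := by
        simp only [Pi.sub_apply]
        rw [abs_le]
        omega
      rw [show (((x - y) i : ℤ) : ℝ) = (((x - y) i : ℤ) : ℝ) from rfl]
      rw [← Int.cast_abs]
      calc ((|(x - y) i| : ℤ) : ℝ) ≤ ((Q:ℤ):ℝ) := by exact_mod_cast habs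
        _ ≤ X := by exact_mod_cast hQle
  -- minimal pairwise separation
  have hoffne : (B.offDiag).Nonempty := by
    refine ⟨(0, fun _ => (Q:ℤ)), Finset.mem_offDiag.mpr ⟨?_, ?_, ?_⟩⟩
    · exact (hBmem 0).mpr (fun i => by simp)
    · exact (hBmem _).mpr (fun i => ⟨by positivity, le_refl _⟩)
    · intro heq
      have := congr_fun heq ⟨0, hn⟩
      simp only [Pi.zero_apply] at this
      have : (Q:ℤ) = 0 := this.symm
      omega
  set P : Finset ℝ := B.offDiag.image (fun p => distInt (L p.1 - L p.2)) with hPdef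
  have hPne : P.Nonempty := hoffne.image _
  set δ : ℝ := P.min' hPne with hδdef
  have hδA : A < δ := by
    have hmem := P.min'_mem hPne
    obtain ⟨p, hp, hpe⟩ := Finset.mem_image.mp hmem
    obtain ⟨h1, h2, h3⟩ := Finset.mem_offDiag.mp hp
    have h4 : A < distInt (L p.1 - L p.2) := hSEP _ h1 _ h2 h3
    exact lt_of_lt_of_eq h4 hpe
  have hδle : ∀ x ∈ B, ∀ y ∈ B, x ≠ y → δ ≤ distInt (L x - L y) := by
    intro x hx y hy hxy
    apply Finset.min'_le
    rw [hPdef, Finset.mem_image]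
    exact ⟨(x, y), Finset.mem_offDiag.mpr ⟨hx, hy, hxy⟩, rfl⟩
  have hδA' : 0 < δ - A := sub_pos.mpr hδA
  -- the multiplier k
  have hMA0 : (0:ℝ) < (M:ℝ) * A := mul_pos hM0 hA
  set k : ℕ := ⌊((M:ℝ) * A)⁻¹⌋₊ + 1 with hkdef
  have hk1 : 1 < (k:ℝ) * ((M:ℝ) * A) := by
    have h1 : ((M:ℝ)*A)⁻¹ < (k:ℝ) := by
      rw [hkdef]; push_cast; exact Nat.lt_floor_add_one _
    calc (1:ℝ) = ((M:ℝ)*A)⁻¹ * ((M:ℝ)*A) := (inv_mul_cancel₀ (ne_of_gt hMA0)).symm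
      _ < (k:ℝ) * ((M:ℝ)*A) := by exact mul_lt_mul_of_pos_right h1 hMA0
  have hk2 : (k:ℝ) ≤ ((M:ℝ)*A)⁻¹ + 1 := by
    rw [hkdef]; push_cast
    exact add_le_add (Nat.floor_le (by positivity)) le_rfl
  have hkMA1 : 0 < (k:ℝ) * ((M:ℝ)*A) - 1 := by linarith
  -- shift and target
  set c : ℕ := (k * Q) / 2 with hcdef
  set sft : Fin n → ℤ := fun _ => (c:ℤ) with hsdef
  set t : ℝ := a + L sft with htdef
  set BigB : Finset (Fin n → ℤ) := Finset.Icc 0 (fun _ => ((k*Q : ℕ) : ℤ)) with hBigdef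
  have hBigmem : ∀ x : Fin n → ℤ, x ∈ BigB ↔ ∀ i, 0 ≤ x i ∧ x i ≤ ((k*Q:ℕ):ℤ) := by
    intro x
    rw [hBigdef, Finset.mem_Icc]
    constructor
    · rintro ⟨h1, h2⟩ i; exact ⟨h1 i, h2 i⟩
    · intro hi; exact ⟨fun i => (hi i).1, fun i => (hi i).2⟩
  have hBigne : BigB.Nonempty := ⟨0, (hBigmem 0).mpr (fun i => by simp; positivity)⟩
  set Gs : Finset ℝ := BigB.image (fun x => distInt (L x - t)) with hGsdef
  have hGsne : Gs.Nonempty := hBigne.image _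
  set G : ℝ := Gs.min' hGsne with hGdef
  have floorest : ∀ z : ℝ, |(⌊z⌋ : ℝ) - z| ≤ 1 := by
    intro z
    rw [abs_le]
    constructor
    · linarith [Int.lt_floor_add_one z]
    · linarith [Int.floor_le z]
  have keyN : ∀ N : ℕ, N.Prime → 2 / (δ - A) < (N:ℝ) →
      (k:ℝ) * ((M:ℝ) + 1) ≤ (N:ℝ) * ((k:ℝ) * ((M:ℝ) * A) - 1) →
      (M:ℝ) * ((N:ℝ) * A - 1) ≤ (N:ℝ) ∧ G ≤ (k:ℝ) * A / 2 + ((k:ℝ) + 1) / (N:ℝ) := by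
    intro N hNp hN1 hN2
    haveI : NeZero N := ⟨hNp.ne_zero⟩
    have hN0 : (0:ℝ) < (N:ℝ) := by exact_mod_cast hNp.pos
    set J : ℤ := ⌊(N:ℝ) * A / 2⌋ with hJdef
    have hJ0 : 0 ≤ J := Int.floor_nonneg.mpr (by positivity)
    have hJle : 2 * (J:ℝ) ≤ (N:ℝ) * A := by
      have h1 : (J:ℝ) ≤ (N:ℝ) * A / 2 := Int.floor_le _
      linarith
    have hJgt : (N:ℝ) * A - 2 < 2 * (J:ℝ) := by
      have h1 : (N:ℝ) * A / 2 < (J:ℝ) + 1 := Int.lt_floor_add_one _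
      linarith
    set r : (Fin n → ℤ) × ℤ → ZMod N := fun p => ((⌊(N:ℝ) * L p.1⌋ + p.2 : ℤ) : ZMod N) with hrdef
    set D : Finset ((Fin n → ℤ) × ℤ) := B ×ˢ Finset.Icc (-J) J with hDdef
    have hDmem : ∀ p : (Fin n → ℤ) × ℤ, p ∈ D ↔ p.1 ∈ B ∧ (-J ≤ p.2 ∧ p.2 ≤ J) := by
      intro p
      rw [hDdef, Finset.mem_product]
      constructor
      · rintro ⟨h1, h2⟩; exact ⟨h1, Finset.mem_Icc.mp h2⟩
      · rintro ⟨h1, h2⟩; exact ⟨h1, Finset.mem_Icc.mpr h2⟩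
    have hinj : Set.InjOn r D := by
      rintro ⟨y, j⟩ hyj ⟨y', j'⟩ hyj' heq
      obtain ⟨hy, hj⟩ := (hDmem _).mp (Finset.mem_coe.mp hyj)
      obtain ⟨hy', hj'⟩ := (hDmem _).mp (Finset.mem_coe.mp hyj')
      have heq' : ((⌊(N:ℝ) * L y⌋ + j : ℤ) : ZMod N) = ((⌊(N:ℝ) * L y'⌋ + j' : ℤ) : ZMod N) := heq
      have hdvd : (N:ℤ) ∣ ((⌊(N:ℝ) * L y⌋ + j) - (⌊(N:ℝ) * L y'⌋ + j')) := by
        rw [← ZMod.intCast_zmod_eq_zero_iff_dvd, Int.cast_sub, heq', sub_self]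
      obtain ⟨cq, hcq⟩ := hdvd
      have hcast : ((⌊(N:ℝ) * L y⌋:ℝ) + (j:ℝ)) - ((⌊(N:ℝ) * L y'⌋:ℝ) + (j':ℝ))
          = (N:ℝ) * (cq:ℝ) := by exact_mod_cast congrArg (Int.cast : ℤ → ℝ) hcq
      have e1 := floorest ((N:ℝ) * L y)
      have e2 := floorest ((N:ℝ) * L y')
      have e3 : |(j:ℝ) - (j':ℝ)| ≤ 2 * (J:ℝ) := by
        rw [abs_le]
        constructor
        · have : -(J:ℝ) ≤ (j:ℝ) := by exact_mod_cast hj.1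
          have : (j':ℝ) ≤ (J:ℝ) := by exact_mod_cast hj'.2
          have : -(J:ℝ) ≤ (j:ℝ) := by exact_mod_cast hj.1
          linarith
        · have h5 : (j:ℝ) ≤ (J:ℝ) := by exact_mod_cast hj.2
          have h6 : -(J:ℝ) ≤ (j':ℝ) := by exact_mod_cast hj'.1
          linarith
      have expand : (N:ℝ) * ((cq:ℝ) - (L y - L y'))
          = ((⌊(N:ℝ) * L y⌋:ℝ) - (N:ℝ) * L y) - ((⌊(N:ℝ) * L y'⌋:ℝ) - (N:ℝ) * L y')
            + ((j:ℝ) - (j':ℝ)) := by linear_combination -hcast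
      have habs : |(N:ℝ) * ((cq:ℝ) - (L y - L y'))| ≤ 2 + 2 * (J:ℝ) := by
        rw [expand]
        calc |((⌊(N:ℝ) * L y⌋:ℝ) - (N:ℝ) * L y) - ((⌊(N:ℝ) * L y'⌋:ℝ) - (N:ℝ) * L y')
              + ((j:ℝ) - (j':ℝ))|
            ≤ |((⌊(N:ℝ) * L y⌋:ℝ) - (N:ℝ) * L y) - ((⌊(N:ℝ) * L y'⌋:ℝ) - (N:ℝ) * L y')|
              + |(j:ℝ) - (j':ℝ)| := abs_add_le _ _
          _ ≤ |(⌊(N:ℝ) * L y⌋:ℝ) - (N:ℝ) * L y| + |(⌊(N:ℝ) * L y'⌋:ℝ) - (N:ℝ) * L y'|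
              + |(j:ℝ) - (j':ℝ)| := by linarith [abs_sub ((⌊(N:ℝ) * L y⌋:ℝ) - (N:ℝ) * L y) ((⌊(N:ℝ) * L y'⌋:ℝ) - (N:ℝ) * L y')]
          _ ≤ 2 + 2 * (J:ℝ) := by linarith
      have hcqd : |(cq:ℝ) - (L y - L y')| ≤ A + 2 / (N:ℝ) := by
        rw [abs_mul, abs_of_pos hN0] at habs
        rw [← mul_le_mul_iff_right₀ hN0]
        calc (N:ℝ) * |(cq:ℝ) - (L y - L y')| ≤ 2 + 2 * (J:ℝ) := habs
          _ ≤ 2 + (N:ℝ) * A := by linarith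
          _ = (N:ℝ) * (A + 2 / (N:ℝ)) := by field_simp; ring
      by_cases hyy : y = y'
      · subst hyy
        have hjj : j - j' = (N:ℤ) * cq := by linarith [hcq]
        have hcq0 : cq = 0 := by
          by_contra hne
          have h5 : 1 ≤ |cq| := Int.one_le_abs hne
          have h6 : (N:ℤ) ≤ |j - j'| := by
            rw [hjj, abs_mul, abs_of_nonneg (by positivity : (0:ℤ) ≤ (N:ℤ))]
            nlinarith [hNp.pos]
          have h7 : |j - j'| ≤ 2 * J := by rw [abs_le]; omega
          have h8 : 2 * (J:ℝ) < (N:ℝ) := by nlinarith [mul_lt_mul_of_pos_left hA1 hN0]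
          have h9 : (N:ℝ) ≤ 2 * (J:ℝ) := by exact_mod_cast h6.trans h7
          linarith
        rw [hcq0, mul_zero] at hjj
        have : j = j' := by omega
        simp [this]
      · exfalso
        have hmin := hδle y hy y' hy' hyy
        have hd : distInt (L y - L y') ≤ |(L y - L y') - (cq:ℝ)| := distInt_le _ cq
        rw [abs_sub_comm] at hd
        have h10 : 2 / (N:ℝ) < δ - A := by
          rw [div_lt_iff₀ hδA'] at hN1
          rw [div_lt_iff₀ hN0]
          nlinarith
        linarith
    set S : Finset (ZMod N) := D.image r with hSdef
    have hIccJ : (Finset.Icc (-J) J).card = (2*J+1).toNat := by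
      rw [Int.card_Icc]
      congr 1
      ring
    have hScard : S.card = M * (2*J+1).toNat := by
      rw [hSdef, Finset.card_image_of_injOn hinj, hDdef, Finset.card_product, hBcard, hIccJ]
    have h2J1 : (((2*J+1).toNat : ℕ) : ℝ) = 2*(J:ℝ)+1 := by
      have h5 : ((2*J+1).toNat : ℤ) = 2*J+1 := Int.toNat_of_nonneg (by omega)
      exact_mod_cast h5
    have hScardR : (S.card : ℝ) = (M:ℝ) * (2*(J:ℝ)+1) := by
      rw [hScard]
      push_cast [h2J1]
      ring
    have hSleN : (S.card : ℝ) ≤ (N:ℝ) := by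
      have h5 := Finset.card_le_univ S
      rw [ZMod.card] at h5
      exact_mod_cast h5
    have conc1 : (M:ℝ) * ((N:ℝ)*A - 1) ≤ (N:ℝ) := by nlinarith
    have hSne : S.Nonempty := by
      rw [hSdef, hDdef]
      exact (hBne.product ⟨0, Finset.mem_Icc.mpr ⟨by omega, hJ0⟩⟩).image r
    have hiter := iterSum_card hNp S hSne k
    have hNle : N ≤ k * (S.card - 1) + 1 := by
      have hs1 : 1 ≤ S.card := hSne.card_pos
      have hk0 : (0:ℝ) ≤ (k:ℝ) := Nat.cast_nonneg k
      have h5 : (M:ℝ) * ((N:ℝ)*A - 1) ≤ (S.card:ℝ) := by nlinarith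
      have h6 : (N:ℝ) ≤ (k:ℝ) * ((S.card:ℝ) - 1) + 1 := by nlinarith
      have h7 : (N:ℝ) ≤ ((k * (S.card - 1) + 1 : ℕ) : ℝ) := by
        have hcast : ((k * (S.card - 1) + 1 : ℕ) : ℝ) = (k:ℝ) * ((S.card:ℝ) - 1) + 1 := by
          push_cast [Nat.cast_sub hs1]
          ring
        rw [hcast]
        exact h6
      exact_mod_cast h7
    have hcardN : N ≤ (iterSum S k).card := by
      rw [min_eq_left hNle] at hiter
      exact hiter
    have huniv : iterSum S k = Finset.univ := by
      apply Finset.eq_univ_of_card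
      have h5 := Finset.card_le_univ (iterSum S k)
      rw [ZMod.card] at h5
      rw [ZMod.card]
      omega
    have DEC : ∀ m : ℕ, ∀ z ∈ iterSum S m, ∃ x : Fin n → ℤ, ∃ E : ℤ,
        (∀ i, 0 ≤ x i ∧ x i ≤ ((m * Q : ℕ) : ℤ)) ∧ (E : ZMod N) = z ∧
        |(E:ℝ) - (N:ℝ) * L x| ≤ (m:ℝ) * ((J:ℝ) + 1) := by
      intro m
      induction m with
      | zero =>
        intro z hz
        simp only [iterSum, Finset.mem_singleton] at hz
        refine ⟨0, 0, by simp, by simp [hz], ?_⟩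
        simp [hL0]
      | succ m ih =>
        intro z hz
        have hz' : z ∈ iterSum S m + S := hz
        rw [Finset.mem_add] at hz'
        obtain ⟨b, hb, e, he, hbe⟩ := hz'
        obtain ⟨x, E, hxb, hEb, hestb⟩ := ih b hb
        obtain ⟨⟨y, j⟩, hyjD, hre⟩ := Finset.mem_image.mp he
        obtain ⟨hy, hj⟩ := (hDmem _).mp hyjD
        refine ⟨x + y, E + ⌊(N:ℝ) * L y⌋ + j, ?_, ?_, ?_⟩
        · intro i
          have h1 := hxb i
          have h2 := ((hBmem y).mp hy) i
          have h3 : (((m+1) * Q : ℕ) : ℤ) = ((m * Q : ℕ) : ℤ) + ((Q:ℕ):ℤ) := by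
            push_cast
            ring
          simp only [Pi.add_apply]
          omega
        · rw [← hbe, ← hre, ← hEb, hrdef]
          push_cast
          ring
        · have e2 := floorest ((N:ℝ) * L y)
          have e3 : |(j:ℝ)| ≤ (J:ℝ) := by
            rw [abs_le]
            constructor
            · exact_mod_cast hj.1
            · exact_mod_cast hj.2
          rw [hLadd]
          have expand : ((E + ⌊(N:ℝ) * L y⌋ + j : ℤ):ℝ) - (N:ℝ)*(L x + L y)
              = ((E:ℝ) - (N:ℝ)*L x) + ((⌊(N:ℝ)*L y⌋:ℝ) - (N:ℝ)*L y) + (j:ℝ) := by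
            push_cast
            ring
          rw [expand]
          calc |((E:ℝ) - (N:ℝ)*L x) + ((⌊(N:ℝ)*L y⌋:ℝ) - (N:ℝ)*L y) + (j:ℝ)|
              ≤ |((E:ℝ) - (N:ℝ)*L x) + ((⌊(N:ℝ)*L y⌋:ℝ) - (N:ℝ)*L y)| + |(j:ℝ)| := abs_add_le _ _
            _ ≤ |(E:ℝ) - (N:ℝ)*L x| + |(⌊(N:ℝ)*L y⌋:ℝ) - (N:ℝ)*L y| + |(j:ℝ)| := by
                linarith [abs_add_le ((E:ℝ) - (N:ℝ)*L x) ((⌊(N:ℝ)*L y⌋:ℝ) - (N:ℝ)*L y)]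
            _ ≤ (m:ℝ) * ((J:ℝ)+1) + 1 + (J:ℝ) := by linarith
            _ = ((m+1:ℕ):ℝ) * ((J:ℝ)+1) := by push_cast; ring
    have hρmem : ((⌊(N:ℝ) * t⌋ : ℤ) : ZMod N) ∈ iterSum S k := by
      rw [huniv]; exact Finset.mem_univ _
    obtain ⟨x, E, hxB, hE, hest⟩ := DEC k _ hρmem
    have hdvd2 : (N:ℤ) ∣ (E - ⌊(N:ℝ) * t⌋) := by
      rw [← ZMod.intCast_zmod_eq_zero_iff_dvd, Int.cast_sub, hE, sub_self]
    obtain ⟨c2, hc2⟩ := hdvd2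
    have hft := floorest ((N:ℝ) * t)
    have hc2R : (E:ℝ) - (⌊(N:ℝ)*t⌋:ℝ) = (N:ℝ)*(c2:ℝ) := by
      exact_mod_cast congrArg (Int.cast : ℤ → ℝ) hc2
    have hbig : |(N:ℝ) * ((L x - t) - (c2:ℝ))| ≤ (k:ℝ)*((J:ℝ)+1) + 1 := by
      have expand : (N:ℝ) * ((L x - t) - (c2:ℝ))
          = -((E:ℝ) - (N:ℝ)*L x) + ((⌊(N:ℝ)*t⌋:ℝ) - (N:ℝ)*t) := by
        linear_combination hc2R
      rw [expand]
      calc |-((E:ℝ) - (N:ℝ)*L x) + ((⌊(N:ℝ)*t⌋:ℝ) - (N:ℝ)*t)|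
          ≤ |-((E:ℝ) - (N:ℝ)*L x)| + |(⌊(N:ℝ)*t⌋:ℝ) - (N:ℝ)*t| := abs_add_le _ _
        _ = |(E:ℝ) - (N:ℝ)*L x| + |(⌊(N:ℝ)*t⌋:ℝ) - (N:ℝ)*t| := by rw [abs_neg]
        _ ≤ (k:ℝ)*((J:ℝ)+1) + 1 := by linarith
    have hsmall : |(L x - t) - (c2:ℝ)| ≤ ((k:ℝ)*((J:ℝ)+1) + 1)/(N:ℝ) := by
      rw [abs_mul, abs_of_pos hN0] at hbig
      rw [le_div_iff₀ hN0]
      linarith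
    have hGle : G ≤ (k:ℝ)*A/2 + ((k:ℝ)+1)/(N:ℝ) := by
      have hxBig : x ∈ BigB := (hBigmem x).mpr hxB
      have hmem2 : distInt (L x - t) ∈ Gs := by
        rw [hGsdef]
        exact Finset.mem_image_of_mem _ hxBig
      have h1 : G ≤ distInt (L x - t) := Finset.min'_le _ _ hmem2
      have h2 : distInt (L x - t) ≤ |(L x - t) - (c2:ℝ)| := distInt_le _ c2
      have hJle2 : (J:ℝ) ≤ (N:ℝ)*A/2 := Int.floor_le _
      have h3 : ((k:ℝ)*((J:ℝ)+1) + 1)/(N:ℝ) ≤ (k:ℝ)*A/2 + ((k:ℝ)+1)/(N:ℝ) := by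
        have hk0 : (0:ℝ) ≤ (k:ℝ) := Nat.cast_nonneg k
        have h4 : (k:ℝ)*((J:ℝ)+1) + 1 ≤ (k:ℝ)*((N:ℝ)*A/2) + ((k:ℝ)+1) := by nlinarith
        calc ((k:ℝ)*((J:ℝ)+1) + 1)/(N:ℝ) ≤ ((k:ℝ)*((N:ℝ)*A/2) + ((k:ℝ)+1))/(N:ℝ) :=
              (div_le_div_iff_of_pos_right hN0).mpr h4
          _ = (k:ℝ)*A/2 + ((k:ℝ)+1)/(N:ℝ) := by field_simp
      linarith
    exact ⟨conc1, hGle⟩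
  -- choose large primes satisfying all conditions
  have getN : ∀ ε : ℝ, 0 < ε → ∃ N : ℕ, N.Prime ∧ 2/(δ-A) < (N:ℝ) ∧
      (k:ℝ)*((M:ℝ)+1) ≤ (N:ℝ)*((k:ℝ)*((M:ℝ)*A)-1) ∧ 1/ε ≤ (N:ℝ) := by
    intro ε hε
    set C : ℝ := max (2/(δ-A)) (max ((k:ℝ)*((M:ℝ)+1)/((k:ℝ)*((M:ℝ)*A)-1)) (1/ε)) with hCdef
    obtain ⟨N, hNge, hNp⟩ := Nat.exists_infinite_primes (⌈C⌉₊ + 1)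
    have hCN : C < (N:ℝ) := by
      have h1 := Nat.le_ceil C
      have h2 : ((⌈C⌉₊ + 1 : ℕ):ℝ) ≤ (N:ℝ) := by exact_mod_cast hNge
      push_cast at h2
      linarith
    refine ⟨N, hNp, lt_of_le_of_lt (le_max_left _ _) hCN, ?_,
      le_of_lt (lt_of_le_of_lt ((le_max_right _ _).trans (le_max_right _ _)) hCN)⟩
    have h3 : (k:ℝ)*((M:ℝ)+1)/((k:ℝ)*((M:ℝ)*A)-1) < (N:ℝ) :=
      lt_of_le_of_lt ((le_max_left _ _).trans (le_max_right _ _)) hCN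
    rw [div_lt_iff₀ hkMA1] at h3
    linarith
  have hMA1 : (M:ℝ) * A ≤ 1 := by
    by_contra hgt
    push_neg at hgt
    have hMA1' : 0 < (M:ℝ)*A - 1 := by linarith
    obtain ⟨N, hNp, h1, h2, h3⟩ := getN (((M:ℝ)*A - 1)/(2*(M:ℝ)))
      (div_pos hMA1' (by positivity))
    obtain ⟨hMA', _⟩ := keyN N hNp h1 h2
    have hN0 : (0:ℝ) < (N:ℝ) := by exact_mod_cast hNp.pos
    have h4 : 1/(((M:ℝ)*A - 1)/(2*(M:ℝ))) = 2*(M:ℝ)/((M:ℝ)*A-1) := one_div_div _ _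
    rw [h4, div_le_iff₀ hMA1'] at h3
    nlinarith
  have hGfin : G ≤ (k:ℝ)*A/2 := by
    refine le_of_forall_pos_le_add ?_
    intro ε hε
    obtain ⟨N, hNp, h1, h2, h3⟩ := getN (ε/((k:ℝ)+1)) (div_pos hε (by positivity))
    obtain ⟨_, hG'⟩ := keyN N hNp h1 h2
    have hN0 : (0:ℝ) < (N:ℝ) := by exact_mod_cast hNp.pos
    have h4 : 1/(ε/((k:ℝ)+1)) = ((k:ℝ)+1)/ε := one_div_div _ _
    rw [h4, div_le_iff₀ hε] at h3
    have h5 : ((k:ℝ)+1)/(N:ℝ) ≤ ε := by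
      rw [div_le_iff₀ hN0]
      nlinarith
    linarith
  -- extract the minimizer
  have hGmem : G ∈ Gs := Gs.min'_mem hGsne
  obtain ⟨x0, hx0B, hx0G⟩ := Finset.mem_image.mp hGmem
  have hx0 := (hBigmem x0).mp hx0B
  refine ⟨x0 - sft, ?_, ?_⟩
  · have heq : (∑ i, ω i * (((x0 - sft) i : ℤ) : ℝ)) - a = L x0 - t := by
      rw [show (∑ i, ω i * (((x0 - sft) i : ℤ) : ℝ)) = L x0 - L sft from hLsub x0 sft, htdef]
      ring
    rw [heq, hbA]
    have h2 : (k:ℝ)*A ≤ ((M:ℝ))⁻¹ + A := by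
      have h3 : (k:ℝ)*A ≤ (((M:ℝ)*A)⁻¹ + 1)*A := mul_le_mul_of_nonneg_right hk2 hA.le
      have h4 : (((M:ℝ)*A)⁻¹ + 1)*A = ((M:ℝ))⁻¹ + A := by
        field_simp
      linarith
    have h5 : ((M:ℝ))⁻¹ ≤ (X^n)⁻¹ := inv_anti₀ hXn hMX
    calc distInt (L x0 - t) = G := hx0G
      _ ≤ (k:ℝ)*A/2 := hGfin
      _ ≤ ((X ^ n)⁻¹ + A) / 2 := by linarith
  · intro i
    have hxi := hx0 i
    have hcc : 2*c ≤ k*Q ∧ k*Q ≤ 2*c+1 := by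
      rw [hcdef]
      obtain ⟨m, hm⟩ : ∃ m, k*Q = m := ⟨_, rfl⟩
      rw [hm]
      omega
    have habs : |(x0 - sft) i| ≤ ((k*Q:ℕ):ℤ) - (c:ℤ) := by
      simp only [Pi.sub_apply, hsdef]
      rw [abs_le]
      have h6 : (2*c:ℤ) ≤ ((k*Q:ℕ):ℤ) := by exact_mod_cast hcc.1
      constructor
      · have := hxi.1
        omega
      · have := hxi.2
        omega
    have hrealabs : |(((x0 - sft) i : ℤ) : ℝ)| ≤ ((k*Q:ℕ):ℝ) - (c:ℝ) := by
      rw [← Int.cast_abs]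
      exact_mod_cast habs
    have h2c : ((k*Q:ℕ):ℝ) - (c:ℝ) ≤ (((k*Q:ℕ):ℝ) + 1)/2 := by
      have h6 : ((k*Q:ℕ):ℝ) ≤ 2*(c:ℝ) + 1 := by exact_mod_cast hcc.2
      linarith
    have hQR : ((k*Q:ℕ):ℝ) = (k:ℝ)*(Q:ℝ) := by push_cast; ring
    have hchain : (k:ℝ)*(Q:ℝ) + 1 ≤ ((X^n)⁻¹ * A⁻¹ + 1)*X := by
      have hβ0 : 0 < (Q:ℝ) + 1 - X := by linarith
      have hq0 : (0:ℝ) < X^(n-1) := pow_pos hX _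
      have hqX : X^(n-1) * X = X^n := by
        rw [← pow_succ]
        congr 1
        omega
      have hMg : X^(n-1) * ((Q:ℝ)+1) ≤ (M:ℝ) := by
        rw [hMR]
        have h7 : X^(n-1) ≤ ((Q:ℝ)+1)^(n-1) := pow_le_pow_left₀ hX.le (by linarith) _
        calc X^(n-1) * ((Q:ℝ)+1) ≤ ((Q:ℝ)+1)^(n-1) * ((Q:ℝ)+1) :=
              mul_le_mul_of_nonneg_right h7 (by linarith)
          _ = ((Q:ℝ)+1)^n := by
              rw [← pow_succ]
              congr 1
              omega
      have hMg2 : X^n + X^(n-1)*((Q:ℝ) + 1 - X) ≤ (M:ℝ) := by nlinarith [hMg, hqX]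
      have hstep1 : (k:ℝ)*(Q:ℝ) + 1 ≤ (Q:ℝ)/((M:ℝ)*A) + X + ((Q:ℝ)+1-X) := by
        have hQ0 : (0:ℝ) ≤ (Q:ℝ) := Nat.cast_nonneg Q
        have h8 : (k:ℝ)*(Q:ℝ) ≤ (((M:ℝ)*A)⁻¹ + 1)*(Q:ℝ) := mul_le_mul_of_nonneg_right hk2 hQ0
        have h9 : (((M:ℝ)*A)⁻¹ + 1)*(Q:ℝ) = (Q:ℝ)/((M:ℝ)*A) + (Q:ℝ) := by
          rw [inv_eq_one_div]
          ring
        linarith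
      have hstep2 : (Q:ℝ)/((M:ℝ)*A) ≤ X/((M:ℝ)*A) := (div_le_div_iff_of_pos_right hMA0).mpr hQle
      have hstep3 : X/((M:ℝ)*A) + ((Q:ℝ)+1-X) ≤ X/(X^n*A) := by
        have e1 : X/(X^n*A) - X/((M:ℝ)*A) = X*((M:ℝ) - X^n)/(X^n*(M:ℝ)*A) := by
          field_simp
        have e2 : X*(X^(n-1)*((Q:ℝ)+1-X)) ≤ X*((M:ℝ) - X^n) := by nlinarith [hMg2]
        have e3 : X*(X^(n-1)*((Q:ℝ)+1-X))/(X^n*(M:ℝ)*A) = ((Q:ℝ)+1-X)/((M:ℝ)*A) := by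
          rw [show X*(X^(n-1)*((Q:ℝ)+1-X)) = X^n*((Q:ℝ)+1-X) from by rw [← hqX]; ring]
          rw [div_eq_div_iff (by positivity) (ne_of_gt hMA0)]
          ring
        have e4 : ((Q:ℝ)+1-X) ≤ ((Q:ℝ)+1-X)/((M:ℝ)*A) := by
          rw [le_div_iff₀ hMA0]
          nlinarith [hMA1, hβ0]
        have e5 : X*(X^(n-1)*((Q:ℝ)+1-X))/(X^n*(M:ℝ)*A) ≤ X*((M:ℝ) - X^n)/(X^n*(M:ℝ)*A) :=
          (div_le_div_iff_of_pos_right (by positivity)).mpr e2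
        rw [e3] at e5
        linarith
      have hfinal : X/(X^n*A) + X = ((X^n)⁻¹*A⁻¹ + 1)*X := by
        field_simp
      linarith
    calc |(((x0 - sft) i : ℤ) : ℝ)| ≤ ((k*Q:ℕ):ℝ) - (c:ℝ) := hrealabs
      _ ≤ (((k*Q:ℕ):ℝ) + 1)/2 := h2c
      _ ≤ ((X^n)⁻¹*A⁻¹+1)*X/2 := by
          rw [hQR]
          linarith
end

section
/- Let γ ∈ (0,1] and let ω ∈ B_γ. Then the finite orbit segment {qω mod 1 : q ∈ ℤ, |q| ≤ γ^{−2}} is γ-dense in ℝ/ℤ: for every a ∈ ℝ there exists an integer q with |q| ≤ γ^{−2} and ‖qω − a‖ ≤ γ. -/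
set_option maxHeartbeats 1000000


/-- `Bgamma γ` is the set of Diophantine numbers of constant type with constant `γ`:
reals `ω` with `|ω − p/q| ≥ γ/q²` for all integers `p` and positive integers `q`. -/
def Bgamma (γ : ℝ) : Set ℝ :=
  {ω | ∀ (p : ℤ) (q : ℕ), 0 < q → γ / (q : ℝ) ^ 2 ≤ |ω - (p : ℝ) / (q : ℝ)|}

lemma distInt_sub_int (x : ℝ) (n : ℤ) : distInt (x - n) = distInt x := by
  unfold distInt
  rw [round_sub_intCast]
  push_cast
  ring_nf

lemma distInt_le_s6 (x : ℝ) (n : ℤ) : distInt x ≤ |x - n| := round_le x n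

/-- The two-generator covering walk: if `u = aω - pa > 0` and `w = pb - bω > 0`,
then every `t ≥ 0` is within `max u w` (from above) of some `qω mod 1` with
`0 ≤ q < a + b`. -/
lemma covering (ω u w : ℝ) (a b pa pb : ℤ)
    (ha : 1 ≤ a) (hb : 1 ≤ b)
    (hu : u = (a : ℝ) * ω - pa) (hw : w = (pb : ℝ) - (b : ℝ) * ω)
    (hu0 : 0 < u) (hw0 : 0 < w) (t : ℝ) (ht : 0 ≤ t) :
    ∃ q m : ℤ, 0 ≤ q ∧ q < a + b ∧ (q : ℝ) * ω - m ≤ t ∧ t ≤ (q : ℝ) * ω - m + max u w := by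
  have hmin : 0 < min u w := lt_min hu0 hw0
  have hminmax : min u w ≤ max u w := min_le_max
  suffices H : ∀ n : ℕ, ∀ t : ℝ, 0 ≤ t → t ≤ n * min u w →
      ∃ q m : ℤ, 0 ≤ q ∧ q < a + b ∧ (q : ℝ) * ω - m ≤ t ∧ t ≤ (q : ℝ) * ω - m + max u w by
    obtain ⟨n, hn⟩ := exists_nat_ge (t / min u w)
    exact H n t ht (by rw [div_le_iff₀ hmin] at hn; linarith)
  intro n
  induction n with
  | zero =>
    intro t ht0 ht1
    have ht2 : t = 0 := le_antisymm (by simpa using ht1) ht0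
    refine ⟨0, 0, le_refl 0, by omega, by simp [ht2], by simp [ht2]; exact Or.inl hu0.le⟩
  | succ n ih =>
    intro t ht0 ht1
    by_cases hc : t ≤ n * min u w
    · exact ih t ht0 hc
    push_neg at hc
    by_cases hc2 : t ≤ max u w
    · exact ⟨0, 0, le_refl 0, by omega, by simpa using ht0, by simpa using hc2⟩
    push_neg at hc2
    have h1 : 0 ≤ t - min u w := by linarith
    have h2 : t - min u w ≤ n * min u w := by push_cast at ht1; linarith
    obtain ⟨q, m, hq0, hqab, hx1, hx2⟩ := ih (t - min u w) h1 h2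
    set x : ℝ := (q : ℝ) * ω - m with hx
    by_cases hqb : q < b
    · -- step by u
      have e : ((q + a : ℤ) : ℝ) * ω - ((m + pa : ℤ) : ℝ) = x + u := by
        push_cast; rw [hu, hx]; ring
      by_cases hxt : x + u ≤ t
      · refine ⟨q + a, m + pa, by omega, by omega, ?_, ?_⟩
        · rw [e]; exact hxt
        · rw [e]
          have := min_le_left u w
          linarith
      · push_neg at hxt
        refine ⟨q, m, hq0, hqab, by rw [← hx]; linarith, ?_⟩
        rw [← hx]
        have := le_max_left u w
        linarith
    · -- step by w
      push_neg at hqb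
      have e : ((q - b : ℤ) : ℝ) * ω - ((m - pb : ℤ) : ℝ) = x + w := by
        push_cast; rw [hw, hx]; ring
      by_cases hxt : x + w ≤ t
      · refine ⟨q - b, m - pb, by omega, by omega, ?_, ?_⟩
        · rw [e]; exact hxt
        · rw [e]
          have := min_le_right u w
          linarith
      · push_neg at hxt
        refine ⟨q, m, hq0, hqab, by rw [← hx]; linarith, ?_⟩
        rw [← hx]
        have := le_max_right u w
        linarith

/-- For `ω ∈ B_γ` with `γ ∈ (0,1]`, the finite orbit segment
`{qω mod 1 : |q| ≤ γ⁻²}` is `γ`-dense in `ℝ/ℤ`. -/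
theorem finite_orbit_gamma_dense (γ : ℝ) (hγ : γ ∈ Set.Ioc (0 : ℝ) 1)
    (ω : ℝ) (hω : ω ∈ Bgamma γ) (a : ℝ) :
    ∃ q : ℤ, (|q| : ℝ) ≤ γ⁻¹ ^ 2 ∧ distInt ((q : ℝ) * ω - a) ≤ γ := by
  obtain ⟨hγ0, hγ1⟩ := hγ
  have hγi : (1 : ℝ) ≤ γ⁻¹ := one_le_inv_iff₀.mpr ⟨hγ0, hγ1⟩
  have hγi2 : γ⁻¹ ≤ γ⁻¹ ^ 2 := by nlinarith
  -- the Diophantine lower bound in the convenient form `γ / c ≤ |cω - p|`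
  have hlow : ∀ c : ℤ, 0 < c → ∀ p : ℤ, γ / (c : ℝ) ≤ |(c : ℝ) * ω - p| := by
    intro c hc p
    have hc' : (0 : ℝ) < (c : ℝ) := by exact_mod_cast hc
    have h := hω p c.toNat (by omega)
    have hcast : ((c.toNat : ℕ) : ℝ) = (c : ℝ) := by norm_cast; omega
    rw [hcast] at h
    calc γ / (c : ℝ) = γ / (c : ℝ) ^ 2 * (c : ℝ) := by field_simp
      _ ≤ |ω - (p : ℝ) / (c : ℝ)| * (c : ℝ) := mul_le_mul_of_nonneg_right h hc'.le
      _ = |ω - (p : ℝ) / (c : ℝ)| * |(c : ℝ)| := by rw [abs_of_pos hc']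
      _ = |(ω - (p : ℝ) / (c : ℝ)) * (c : ℝ)| := (abs_mul _ _).symm
      _ = |(c : ℝ) * ω - p| := by
          congr 1
          rw [sub_mul, div_mul_cancel₀ _ hc'.ne']
          ring
  -- the two scales
  set n : ℕ := ⌊γ⁻¹⌋₊ with hn
  have hn1 : (n : ℝ) ≤ γ⁻¹ := Nat.floor_le (by positivity)
  have hn2 : γ⁻¹ < (n : ℝ) + 1 := Nat.lt_floor_add_one _
  have n_pos : 0 < n := Nat.floor_pos.mpr hγi
  set N : ℕ := ⌊γ⁻¹ ^ 2⌋₊ with hN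
  have hN1 : (N : ℝ) ≤ γ⁻¹ ^ 2 := Nat.floor_le (by positivity)
  have hN2 : γ⁻¹ ^ 2 < (N : ℝ) + 1 := Nat.lt_floor_add_one _
  have N_pos : 0 < N := Nat.floor_pos.mpr (le_trans hγi hγi2)
  -- minimizer of distInt (q ω) over 1 ≤ q ≤ n
  obtain ⟨k, hkmem, hkmin⟩ := Finset.exists_min_image (Finset.Icc 1 n)
    (fun q : ℕ => distInt ((q : ℝ) * ω)) ⟨n, Finset.mem_Icc.mpr ⟨n_pos, le_refl n⟩⟩
  rw [Finset.mem_Icc] at hkmem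
  obtain ⟨hk1, hkn⟩ := hkmem
  set j : ℤ := round ((k : ℝ) * ω) with hj
  set θ : ℝ := (k : ℝ) * ω - j with hθ
  set δ : ℝ := |θ| with hδ
  have hδ_eq : δ = distInt ((k : ℝ) * ω) := rfl
  -- upper bound on δ via Dirichlet at level n
  obtain ⟨j₀, k₀, hk₀0, hk₀n, hdir₀⟩ := Real.exists_int_int_abs_mul_sub_le ω n_pos
  have hδup : δ < γ := by
    have h1 : δ ≤ distInt ((k₀.toNat : ℝ) * ω) := by
      rw [hδ_eq]
      exact hkmin k₀.toNat (by rw [Finset.mem_Icc]; omega)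
    have hcast : ((k₀.toNat : ℕ) : ℝ) = (k₀ : ℝ) := by norm_cast; omega
    have h2 : distInt ((k₀.toNat : ℝ) * ω) ≤ |(k₀ : ℝ) * ω - j₀| := by
      rw [hcast]; exact distInt_le_s6 _ _
    have h3 : (1 : ℝ) / ((n : ℝ) + 1) < γ := by
      rw [div_lt_iff₀ (by positivity)]
      have := mul_lt_mul_of_pos_left hn2 hγ0
      rwa [mul_inv_cancel₀ hγ0.ne'] at this
    linarith
  -- lower bound on δ
  have hkpos' : (0 : ℝ) < (k : ℝ) := by exact_mod_cast hk1
  have hδlow : γ ^ 2 ≤ δ := by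
    have h1 : γ / (k : ℝ) ≤ δ := by
      have := hlow (k : ℤ) (by exact_mod_cast hk1) j
      simpa [hθ] using this
    have h2 : γ ^ 2 ≤ γ / (k : ℝ) := by
      rw [le_div_iff₀ hkpos']
      have hkγ : (k : ℝ) ≤ γ⁻¹ := le_trans (by exact_mod_cast hkn) hn1
      calc γ ^ 2 * (k : ℝ) ≤ γ ^ 2 * γ⁻¹ := by
            exact mul_le_mul_of_nonneg_left hkγ (by positivity)
        _ = γ := by field_simp
    linarith
  have hδpos : 0 < δ := lt_of_lt_of_le (by positivity) hδlow
  -- Dirichlet at level N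
  obtain ⟨j', k', hk'0, hk'N, hdir'⟩ := Real.exists_int_int_abs_mul_sub_le ω N_pos
  set θ' : ℝ := (k' : ℝ) * ω - j' with hθ'
  have hδ'up : |θ'| < γ ^ 2 := by
    have h3 : (1 : ℝ) / ((N : ℝ) + 1) < γ ^ 2 := by
      rw [div_lt_iff₀ (by positivity)]
      have h4 : γ ^ 2 * (γ⁻¹ ^ 2) < γ ^ 2 * ((N : ℝ) + 1) :=
        mul_lt_mul_of_pos_left hN2 (by positivity)
      have h5 : γ ^ 2 * (γ⁻¹ ^ 2) = 1 := by field_simp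
      linarith
    exact lt_of_le_of_lt hdir' h3
  have hδ'δ : |θ'| < δ := lt_of_lt_of_le hδ'up hδlow
  have hθ'pos : 0 < |θ'| := by
    have := hlow k' hk'0 j'
    have hk'r : (0 : ℝ) < (k' : ℝ) := by exact_mod_cast hk'0
    calc (0 : ℝ) < γ / (k' : ℝ) := by positivity
      _ ≤ |θ'| := this
  -- k < k'
  have hkk' : (k : ℤ) < k' := by
    by_contra hcon
    push_neg at hcon
    have h1 : distInt ((k'.toNat : ℝ) * ω) ≤ |θ'| := by
      have hcast : ((k'.toNat : ℕ) : ℝ) = (k' : ℝ) := by norm_cast; omega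
      rw [hcast]; exact distInt_le_s6 _ _
    have h2 : δ ≤ distInt ((k'.toNat : ℝ) * ω) := by
      rw [hδ_eq]
      refine hkmin k'.toNat (by rw [Finset.mem_Icc]; omega)
    linarith
  -- build the two-generator package
  have hθne : θ ≠ 0 := fun h => by simp [hδ, h] at hδpos
  have hθ'ne : θ' ≠ 0 := fun h => by simp [h] at hθ'pos
  obtain ⟨A, B, pa, pb, u, w, hA1, hB1, hAB, hu, hw, hu0, hw0, huδ, hwδ⟩ :
      ∃ (A B pa pb : ℤ) (u w : ℝ), 1 ≤ A ∧ 1 ≤ B ∧ ((A : ℝ) + B ≤ γ⁻¹ + γ⁻¹ ^ 2) ∧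
        u = (A : ℝ) * ω - pa ∧ w = (pb : ℝ) - (B : ℝ) * ω ∧
        0 < u ∧ 0 < w ∧ u ≤ δ ∧ w ≤ δ := by
    have hkr : ((k : ℤ) : ℝ) = (k : ℝ) := by norm_cast
    have hk'N' : ((k' : ℤ) : ℝ) ≤ (N : ℝ) := by exact_mod_cast hk'N
    have hknr : ((k : ℤ) : ℝ) ≤ (n : ℝ) := by exact_mod_cast (show (k : ℤ) ≤ (n : ℤ) by exact_mod_cast hkn)
    rcases lt_trichotomy θ 0 with hts | hts | hts
    · rcases lt_trichotomy θ' 0 with hts' | hts' | hts'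
      · -- both negative : A = k' - k (error θ' - θ > 0), B = k (error θ < 0)
        refine ⟨k' - k, k, j' - j, j, θ' - θ, -θ, by omega, by exact_mod_cast hk1, ?_, ?_, ?_, ?_, ?_, ?_, ?_⟩
        · push_cast
          calc (k' : ℝ) - (k : ℝ) + (k : ℝ) = (k' : ℝ) := by ring
            _ ≤ (N : ℝ) := hk'N'
            _ ≤ γ⁻¹ ^ 2 := hN1
            _ ≤ γ⁻¹ + γ⁻¹ ^ 2 := by linarith [hγi]
        · push_cast; rw [hθ', hθ]; try push_cast; try ring
        · rw [hθ]; try push_cast; try ring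
        · -- 0 < θ' - θ : θ = -δ, θ' = -|θ'|, |θ'| < δ
          have h1 : θ = -δ := by rw [hδ, abs_of_neg hts]; ring
          have h2 : θ' = -|θ'| := by rw [abs_of_neg hts']; ring
          nlinarith [hδ'δ, abs_nonneg θ']
        · linarith
        · have h1 : θ = -δ := by rw [hδ, abs_of_neg hts]; ring
          have h2 : -|θ'| ≤ θ' := neg_abs_le θ'
          nlinarith [abs_nonneg θ']
        · have h1 : θ = -δ := by rw [hδ, abs_of_neg hts]; ring
          linarith
      · exact absurd hts' hθ'ne
      · -- θ < 0 < θ' : A = k' (error θ' > 0), B = k (error θ < 0)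
        refine ⟨k', k, j', j, θ', -θ, by omega, by exact_mod_cast hk1, ?_, ?_, ?_, hts', ?_, ?_, ?_⟩
        · push_cast
          calc (k' : ℝ) + (k : ℝ) ≤ (N : ℝ) + (n : ℝ) := by
                have := hk'N'
                push_cast at this ⊢
                linarith [hknr]
            _ ≤ γ⁻¹ ^ 2 + γ⁻¹ := by linarith
            _ = γ⁻¹ + γ⁻¹ ^ 2 := by ring
        · rw [hθ']; try push_cast; try ring
        · rw [hθ]; try push_cast; try ring
        · linarith
        · rw [← abs_of_pos hts']
          linarith
        · rw [hδ, abs_of_neg hts]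
    · exact absurd hts hθne
    · rcases lt_trichotomy θ' 0 with hts' | hts' | hts'
      · -- θ > 0 > θ' : A = k (error θ > 0), B = k' (error θ' < 0)
        refine ⟨k, k', j, j', θ, -θ', by exact_mod_cast hk1, by omega, ?_, ?_, ?_, hts, ?_, ?_, ?_⟩
        · push_cast
          calc (k : ℝ) + (k' : ℝ) ≤ (n : ℝ) + (N : ℝ) := by linarith [hknr, hk'N']
            _ ≤ γ⁻¹ + γ⁻¹ ^ 2 := by linarith
        · rw [hθ]; try push_cast; try ring
        · rw [hθ']; try push_cast; try ring
        · linarith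
        · rw [hδ, abs_of_pos hts]
        · rw [← abs_of_neg hts']
          linarith
      · exact absurd hts' hθ'ne
      · -- both positive : A = k (error θ > 0), B = k' - k (error θ' - θ < 0)
        refine ⟨k, k' - k, j, j' - j, θ, θ - θ', by exact_mod_cast hk1, by omega, ?_, ?_, ?_, hts, ?_, ?_, ?_⟩
        · push_cast
          calc (k : ℝ) + ((k' : ℝ) - (k : ℝ)) = (k' : ℝ) := by ring
            _ ≤ (N : ℝ) := hk'N'
            _ ≤ γ⁻¹ ^ 2 := hN1
            _ ≤ γ⁻¹ + γ⁻¹ ^ 2 := by linarith [hγi]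
        · rw [hθ]; try push_cast; try ring
        · rw [hθ, hθ']; try push_cast; try ring
        · have h1 : θ' ≤ |θ'| := le_abs_self θ'
          have h2 : θ = δ := by rw [hδ, abs_of_pos hts]
          linarith
        · have h2 : θ = δ := by rw [hδ, abs_of_pos hts]
          have h3 : -|θ'| ≤ θ' := neg_abs_le θ'
          nlinarith [abs_nonneg θ']
        · rw [hδ, abs_of_pos hts]; linarith
  -- apply the covering lemma around a recentered target
  set c : ℤ := (A + B) / 2 with hc
  set T : ℝ := a + (c : ℝ) * ω with hT
  obtain ⟨q, m, hq0, hqAB, hx1, hx2⟩ :=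
    covering ω u w A B pa pb hA1 hB1 hu hw hu0 hw0 (Int.fract T) (Int.fract_nonneg T)
  have hmax0 : 0 ≤ max u w := le_trans hu0.le (le_max_left u w)
  refine ⟨q - c, ?_, ?_⟩
  · have h3 : -(A + B) ≤ 2 * (q - c) := by omega
    have h4 : 2 * (q - c) ≤ A + B := by omega
    have h3' : -((A : ℝ) + (B : ℝ)) ≤ 2 * ((q - c : ℤ) : ℝ) := by exact_mod_cast h3
    have h4' : 2 * ((q - c : ℤ) : ℝ) ≤ (A : ℝ) + (B : ℝ) := by exact_mod_cast h4
    have habs : |((q - c : ℤ) : ℝ)| ≤ ((A : ℝ) + B) / 2 := by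
      rw [abs_le]; constructor <;> linarith
    calc |((q - c : ℤ) : ℝ)| ≤ ((A : ℝ) + B) / 2 := habs
      _ ≤ (γ⁻¹ + γ⁻¹ ^ 2) / 2 := by linarith
      _ ≤ γ⁻¹ ^ 2 := by linarith
  · have key : ((q - c : ℤ) : ℝ) * ω - a = ((q : ℝ) * ω - Int.fract T) - ((⌊T⌋ : ℤ) : ℝ) := by
      rw [Int.fract, hT]
      push_cast
      ring
    rw [key, distInt_sub_int]
    have h5 : distInt ((q : ℝ) * ω - Int.fract T) ≤ |((q : ℝ) * ω - Int.fract T) - m| :=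
      distInt_le_s6 _ m
    have h6 : |((q : ℝ) * ω - Int.fract T) - m| ≤ max u w := by
      rw [abs_le]
      constructor <;> linarith
    have h7 : max u w ≤ δ := max_le huδ hwδ
    linarith
end

section
/- Let γ > 0, ω ∈ B_γ, a ∈ ℝ and ε > 0. If m and n are positive integers with ‖mω − a‖ < ε and ‖nω + a‖ < ε, then m + n > γ/(2ε). -/
/-- If `ω ∈ B_γ` and both `‖mω − a‖ < ε` and `‖nω + a‖ < ε` for positive integers
`m, n`, then `m + n > γ/(2ε)`. -/
theorem two_collision_returns (γ : ℝ) (hγ : 0 < γ) (ω : ℝ) (hω : ω ∈ Bgamma γ)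
    (a ε : ℝ) (hε : 0 < ε) (m n : ℕ) (hm : 0 < m) (hn : 0 < n)
    (h1 : distInt ((m : ℝ) * ω - a) < ε) (h2 : distInt ((n : ℝ) * ω + a) < ε) :
    γ / (2 * ε) < (m : ℝ) + (n : ℝ) := by
  set q : ℕ := m + n with hq
  have hq0 : 0 < q := Nat.add_pos_left hm n
  have hQ : (0:ℝ) < (q:ℝ) := Nat.cast_pos.mpr hq0
  set x := (m : ℝ) * ω - a with hx
  set y := (n : ℝ) * ω + a with hy
  have hxy : (q : ℝ) * ω = x + y := by
    push_cast [hq]; ring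
  have key : distInt ((q : ℝ) * ω) < 2 * ε := by
    have h3 : distInt ((q:ℝ) * ω) ≤ distInt x + distInt y := by
      have := round_le ((q:ℝ) * ω) (round x + round y)
      refine this.trans ?_
      have : (q:ℝ) * ω - ((round x + round y : ℤ) : ℝ)
          = (x - round x) + (y - round y) := by
        push_cast; rw [hxy]; ring
      rw [this]
      exact (abs_add_le _ _)
    calc distInt ((q:ℝ)*ω) ≤ distInt x + distInt y := h3
      _ < ε + ε := by exact add_lt_add h1 h2
      _ = 2 * ε := by ring
  have hb := hω (round ((q:ℝ) * ω)) q hq0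
  have heq : |ω - ((round ((q:ℝ)*ω) : ℤ) : ℝ) / (q:ℝ)| = distInt ((q:ℝ)*ω) / (q:ℝ) := by
    rw [distInt, ← abs_of_pos hQ, ← abs_div]
    congr 1
    field_simp
    rw [abs_of_pos hQ]; ring
  rw [heq] at hb
  have h4 : γ / (q:ℝ)^2 < 2 * ε / (q:ℝ) := hb.trans_lt (by gcongr)
  have h5 : γ < 2 * ε * (q:ℝ) := by
    have h6 := (div_lt_div_iff₀ (by positivity) hQ).mp h4
    nlinarith
  rw [div_lt_iff₀ (by positivity)]
  have : ((q:ℕ):ℝ) = (m:ℝ) + (n:ℝ) := by push_cast [hq]; ring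
  nlinarith
end
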